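/- For every integer p ≥ 3, r_p = Σ_{n=2}^∞ c_n · p^{2−2n}, where c_n = (2 − 2^{2n−1}) / (π n (2n−1)(n−1)), and the series converges. In particular each c_n < 0 for n ≥ 2. -/

import Mathlib

/-- `r_p`, with the convention `m² ln|m| = 0` when `m = 0` (automatic since `Real.log 0 = 0`). -/
noncomputable def rFn (p : ℕ) : ℝ :=
  (1 / (2 * Real.pi)) *
    (((p : ℝ) - 2) ^ 2 * Real.log |(p : ℝ) - 2| - 4 * ((p : ℝ) - 1) ^ 2 * Real.log |(p : ℝ) - 1|
      + 6 * (p : ℝ) ^ 2 * Real.log (p : ℝ) - 4 * ((p : ℝ) + 1) ^ 2 * Real.log ((p : ℝ) + 1)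
      + ((p : ℝ) + 2) ^ 2 * Real.log ((p : ℝ) + 2))

/-- `c_n = (2 - 2^(2n-1)) / (π n (2n-1)(n-1))`. -/
noncomputable def cR (n : ℕ) : ℝ :=
  (2 - (2 : ℝ) ^ (2 * n - 1)) / (Real.pi * n * (2 * n - 1) * (n - 1))

lemma lemA (y : ℝ) (hy : |y| < 1) :
    HasSum (fun m : ℕ => (-1) ^ m * 2 * y ^ (m + 3) / (((m : ℝ) + 1) * ((m : ℝ) + 2) * ((m : ℝ) + 3)))
      ((1 + y) ^ 2 * Real.log (1 + y) - y - 3 / 2 * y ^ 2) := by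
  have h0 : HasSum (fun n : ℕ => (-y) ^ (n + 1) / ((n : ℝ) + 1)) (-Real.log (1 - -y)) :=
    Real.hasSum_pow_div_log_of_abs_lt_one (x := -y) (by rwa [abs_neg])
  have hP : HasSum (fun n : ℕ => -((-y) ^ (n + 1) / ((n : ℝ) + 1))) (Real.log (1 + y)) := by
    have := h0.neg
    simpa [sub_neg_eq_add] using this
  have hP2 : HasSum (fun n : ℕ => -((-y) ^ (n + 2 + 1) / ((n : ℝ) + 2 + 1)))
      (Real.log (1 + y) - (y - y ^ 2 / 2)) := by
    have := (hasSum_nat_add_iff' (f := fun n : ℕ => -((-y) ^ (n + 1) / ((n : ℝ) + 1))) 2).mpr hP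
    convert this using 2
    · rfl
    · push_cast; ring
    · simp [Finset.sum_range_succ]
      ring
  have hQ : HasSum (fun n : ℕ => 2 * y * -((-y) ^ (n + 1) / ((n : ℝ) + 1)))
      (2 * y * Real.log (1 + y)) := hP.mul_left _
  have hQ1 : HasSum (fun n : ℕ => 2 * y * -((-y) ^ (n + 1 + 1) / ((n : ℝ) + 1 + 1)))
      (2 * y * Real.log (1 + y) - 2 * y ^ 2) := by
    have := (hasSum_nat_add_iff' (f := fun n : ℕ => 2 * y * -((-y) ^ (n + 1) / ((n : ℝ) + 1))) 1).mpr hQ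
    convert this using 2
    · rfl
    · push_cast; ring
    · simp [Finset.sum_range_succ]
      ring
  have hR : HasSum (fun n : ℕ => y ^ 2 * -((-y) ^ (n + 1) / ((n : ℝ) + 1)))
      (y ^ 2 * Real.log (1 + y)) := hP.mul_left _
  have key := (hP2.add hQ1).add hR
  convert key using 1
  · funext m
    have h1 : ((m : ℝ) + 1) ≠ 0 := by positivity
    have h2 : ((m : ℝ) + 2) ≠ 0 := by positivity
    have h3 : ((m : ℝ) + 3) ≠ 0 := by positivity
    rw [show (-y) = (-1) * y by ring]
    simp only [mul_pow, pow_add, pow_one]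
    norm_num
    field_simp
    ring
  · ring

lemma lemB (x : ℝ) (hx : |2 * x| < 1) :
    HasSum (fun j : ℕ => (4 * (1 - 2 ^ (2 * j + 2)) / (((j : ℝ) + 1) * (2 * (j : ℝ) + 3) * ((j : ℝ) + 2))) * x ^ (2 * j + 4))
      ((1 - 2 * x) ^ 2 * Real.log (1 - 2 * x) - 4 * ((1 - x) ^ 2 * Real.log (1 - x))
        - 4 * ((1 + x) ^ 2 * Real.log (1 + x)) + (1 + 2 * x) ^ 2 * Real.log (1 + 2 * x)) := by
  have hx1 : |x| < 1 := by
    rw [abs_mul] at hx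
    norm_num at hx
    linarith [abs_nonneg x]
  have h1 : |(-(2 * x))| < 1 := by rwa [abs_neg]
  have h2 : |(-x)| < 1 := by rwa [abs_neg]
  have key := (((lemA (-(2*x)) h1).add ((lemA (-x) h2).mul_left (-4))).add
      ((lemA x hx1).mul_left (-4))).add (lemA (2*x) hx)
  set f : ℕ → ℝ := fun m =>
      (-1) ^ m * 2 * (-(2*x)) ^ (m + 3) / (((m : ℝ) + 1) * ((m : ℝ) + 2) * ((m : ℝ) + 3))
        + -4 * ((-1) ^ m * 2 * (-x) ^ (m + 3) / (((m : ℝ) + 1) * ((m : ℝ) + 2) * ((m : ℝ) + 3)))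
        + -4 * ((-1) ^ m * 2 * x ^ (m + 3) / (((m : ℝ) + 1) * ((m : ℝ) + 2) * ((m : ℝ) + 3)))
        + (-1) ^ m * 2 * (2*x) ^ (m + 3) / (((m : ℝ) + 1) * ((m : ℝ) + 2) * ((m : ℝ) + 3)) with hf
  have keyf : HasSum f ((1 - 2 * x) ^ 2 * Real.log (1 - 2 * x) - 4 * ((1 - x) ^ 2 * Real.log (1 - x))
        - 4 * ((1 + x) ^ 2 * Real.log (1 + x)) + (1 + 2 * x) ^ 2 * Real.log (1 + 2 * x)) := by
    convert key using 1
    ring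
  have hinj : Function.Injective (fun j : ℕ => 2 * j + 1) := fun a b h => by dsimp only at h; omega
  have hzero : ∀ m : ℕ, m ∉ Set.range (fun j : ℕ => 2 * j + 1) → f m = 0 := by
    intro m hm
    have hme : Even m := by
      rcases Nat.even_or_odd m with h | h
      · exact h
      · obtain ⟨k, hk⟩ := h
        exact absurd ⟨k, hk.symm⟩ hm
    have ho : Odd (m + 3) := by
      obtain ⟨k, hk⟩ := hme
      exact ⟨k + 1, by omega⟩
    rw [hf]
    dsimp only
    rw [ho.neg_pow (2*x), ho.neg_pow x]
    ring
  rw [← Function.Injective.hasSum_iff hinj hzero] at keyf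
  convert keyf using 1
  funext j
  simp only [Function.comp, hf]
  have he : Even (2 * j + 1 + 3) := ⟨j + 2, by omega⟩
  have hodd : Odd (2 * j + 1) := ⟨j, by omega⟩
  rw [he.neg_pow (2*x), he.neg_pow x, hodd.neg_one_pow]
  have d1 : ((j : ℝ) + 1) ≠ 0 := by positivity
  have d2 : (2 * (j : ℝ) + 3) ≠ 0 := by positivity
  have d3 : ((j : ℝ) + 2) ≠ 0 := by positivity
  have e1 : ((2 * j + 1 : ℕ) : ℝ) + 1 = 2 * ((j : ℝ) + 1) := by push_cast; ring
  have e2 : ((2 * j + 1 : ℕ) : ℝ) + 2 = 2 * (j : ℝ) + 3 := by push_cast; ring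
  have e3 : ((2 * j + 1 : ℕ) : ℝ) + 3 = 2 * ((j : ℝ) + 2) := by push_cast; ring
  rw [e1, e2, e3]
  rw [mul_pow]
  have epow : (2 * j + 1 + 3) = (2 * j + 2) + 2 := by omega
  rw [epow, show (2*j+4) = (2*j+2)+2 by omega]
  rw [pow_add, pow_add]
  field_simp
  ring

theorem stmt9 (p : ℕ) (hp : 3 ≤ p) :
    HasSum (fun n : ℕ => cR (n + 2) * (p : ℝ) ^ ((2 : ℝ) - 2 * ((n : ℝ) + 2))) (rFn p) ∧
    ∀ n : ℕ, 2 ≤ n → cR n < 0 := by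
  have hπ : Real.pi ≠ 0 := Real.pi_ne_zero
  constructor
  · have hq3 : (3 : ℝ) ≤ (p : ℝ) := by exact_mod_cast hp
    have hq0 : (0 : ℝ) < (p : ℝ) := by linarith
    have hqne : (p : ℝ) ≠ 0 := ne_of_gt hq0
    have hx : |2 * (1 / (p : ℝ))| < 1 := by
      rw [abs_of_pos (by positivity)]
      rw [show 2 * (1 / (p : ℝ)) = 2 / (p : ℝ) by ring, div_lt_one hq0]
      linarith
    have HB := (lemB (1 / (p : ℝ)) hx).mul_left ((p : ℝ) ^ 2 / (2 * Real.pi))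
    have hval : (p : ℝ) ^ 2 / (2 * Real.pi) *
        ((1 - 2 * (1 / (p : ℝ))) ^ 2 * Real.log (1 - 2 * (1 / (p : ℝ)))
          - 4 * ((1 - 1 / (p : ℝ)) ^ 2 * Real.log (1 - 1 / (p : ℝ)))
          - 4 * ((1 + 1 / (p : ℝ)) ^ 2 * Real.log (1 + 1 / (p : ℝ)))
          + (1 + 2 * (1 / (p : ℝ))) ^ 2 * Real.log (1 + 2 * (1 / (p : ℝ)))) = rFn p := by
      have l1 : Real.log (1 - 2 * (1 / (p : ℝ))) = Real.log ((p : ℝ) - 2) - Real.log (p : ℝ) := by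
        rw [show (1 - 2 * (1 / (p : ℝ))) = ((p : ℝ) - 2) / (p : ℝ) by field_simp,
          Real.log_div (by linarith) hqne]
      have l2 : Real.log (1 - 1 / (p : ℝ)) = Real.log ((p : ℝ) - 1) - Real.log (p : ℝ) := by
        rw [show (1 - 1 / (p : ℝ)) = ((p : ℝ) - 1) / (p : ℝ) by field_simp,
          Real.log_div (by linarith) hqne]
      have l3 : Real.log (1 + 1 / (p : ℝ)) = Real.log ((p : ℝ) + 1) - Real.log (p : ℝ) := by
        rw [show (1 + 1 / (p : ℝ)) = ((p : ℝ) + 1) / (p : ℝ) by field_simp,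
          Real.log_div (by linarith) hqne]
      have l4 : Real.log (1 + 2 * (1 / (p : ℝ))) = Real.log ((p : ℝ) + 2) - Real.log (p : ℝ) := by
        rw [show (1 + 2 * (1 / (p : ℝ))) = ((p : ℝ) + 2) / (p : ℝ) by field_simp,
          Real.log_div (by linarith) hqne]
      rw [l1, l2, l3, l4, rFn,
        abs_of_pos (show (0:ℝ) < (p : ℝ) - 2 by linarith),
        abs_of_pos (show (0:ℝ) < (p : ℝ) - 1 by linarith)]
      field_simp
      ring
    have hterm : ∀ n : ℕ, cR (n + 2) * (p : ℝ) ^ ((2 : ℝ) - 2 * ((n : ℝ) + 2)) =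
        (p : ℝ) ^ 2 / (2 * Real.pi) *
          ((4 * (1 - 2 ^ (2 * n + 2)) / (((n : ℝ) + 1) * (2 * (n : ℝ) + 3) * ((n : ℝ) + 2))) *
            (1 / (p : ℝ)) ^ (2 * n + 4)) := by
      intro n
      have hrpow : (p : ℝ) ^ ((2 : ℝ) - 2 * ((n : ℝ) + 2)) = ((p : ℝ) ^ (2 * n + 2 : ℕ))⁻¹ := by
        rw [show (2 : ℝ) - 2 * ((n : ℝ) + 2) = -((2 * n + 2 : ℕ) : ℝ) by push_cast; ring,
          Real.rpow_neg hq0.le, Real.rpow_natCast]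
      rw [hrpow, cR, show 2 * (n + 2) - 1 = 2 * n + 3 from by omega]
      push_cast
      have d1 : ((n : ℝ) + 1) ≠ 0 := by positivity
      have d2 : (2 * (n : ℝ) + 3) ≠ 0 := by positivity
      have d3 : ((n : ℝ) + 2) ≠ 0 := by positivity
      have d4 : (2 * ((n : ℝ) + 2) - 1) = 2 * (n : ℝ) + 3 := by ring
      rw [show (2 * n + 4) = (2 * n + 2) + 2 from by omega, pow_add, pow_add]
      rw [show ((n:ℝ) + 2 - 1) = (n:ℝ) + 1 from by ring, d4]
      have hppow : ((p:ℝ) ^ (2 * n)) ≠ 0 := pow_ne_zero _ hqne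
      rw [div_pow, one_pow]
      field_simp
      ring
    rw [funext hterm]
    exact hval ▸ HB
  · intro n hn
    have hn2 : (2 : ℝ) ≤ (n : ℝ) := by exact_mod_cast hn
    rw [cR]
    apply div_neg_of_neg_of_pos
    · have h8 : (8 : ℝ) ≤ 2 ^ (2 * n - 1) := by
        calc (8 : ℝ) = 2 ^ 3 := by norm_num
        _ ≤ 2 ^ (2 * n - 1) := pow_le_pow_right₀ (by norm_num) (by omega)
      linarith
    · have := Real.pi_pos
      apply mul_pos (mul_pos (mul_pos Real.pi_pos (by linarith)) (by linarith)) (by linarith)
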